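/- The automorphism Ψ maps the ideal of F_S generated by the entries of the two matrices τ(Â) − Λ_mat·Φ^L_w·τ(A) and τ(A) − τ(Â)·Φ^R_w·Λ_mat^{−1} onto the ideal of F_S generated by the entries of the two matrices g·τ(Â) + Λ'·Φ^L_w·τ(A) and τ(A) + g·τ(Â)·Φ^R_w·(Λ')^{−1}. (Thus, after the substitution τ, the defining relations (KCH2)–(KCH3) of degree-0 abelianized knot contact homology are carried by Ψ to the modified relations −gÂ = Λ'Φ^L A and A = −gÂΦ^R(Λ')^{−1}.) -/

import Mathlib

/-!
STATEMENT 13: The automorphism `Ψ` maps the ideal of `F_S` generated by the entries of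
the two matrices `τ(Â) − Λ_mat·Φ^L_w·τ(A)` and `τ(A) − τ(Â)·Φ^R_w·Λ_mat^{−1}` onto the
ideal generated by the entries of `g·τ(Â) + Λ'·Φ^L_w·τ(A)` and
`τ(A) + g·τ(Â)·Φ^R_w·(Λ')^{−1}`.

Setup (0-indexed, the strand `1` of the paper corresponding to `⟨0, _⟩ : Fin n`):
`S = ℂ[ν^{±1}, Λ^{±1}, g^{±1}]` is modeled as `AddMonoidAlgebra ℂ (Fin 3 →₀ ℤ)` with
`ν = x₀, Λ = x₁, g = x₂`; `F_S` is the polynomial ring over `S` in the variables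
`a_{ij}`, `i ≠ j ∈ Fin n`.  The matrices `τ(A)`, `τ(Â)`, `Φ^L_w`, `Φ^R_w` are written
directly over `F_S` (τ fixes the variables `a_{ij}`, and `Φ^L_w`, `Φ^R_w` have integer
coefficients in the `a_{ij}`).  A positive braid word is a list of generator indices `k`
with `k + 1 < n`; its writhe is `wr = ℓ`, its length.  The hypothesis that `π(w)` is an
`n`-cycle is expressed by transitivity of its powers; `d(i)` is the least `k ≥ 0` with
`π(w)^k(i) = 1` (via `Nat.find`), and `Ψ(a_{ij}) = (−g)^{d(i)−d(j)}·a_{ij}`.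
`Λ_mat = diag(−Λ^{−1}ν^{−2wr}g^{wr−n}, 1, …, 1)` and
`Λ' = diag(Λ^{−1}ν^{−2wr}(−g)^{wr}, 1, …, 1)`, with their explicit diagonal inverses.
-/

noncomputable section

/-- The Laurent polynomial ring `S = ℂ[ν^{±1}, Λ^{±1}, g^{±1}]`. -/
abbrev S : Type := AddMonoidAlgebra ℂ (Fin 3 →₀ ℤ)

/-- The Laurent monomial `c·ν^{e₀}·Λ^{e₁}·g^{e₂}`. -/
def mono (e0 e1 e2 : ℤ) (c : ℂ) : S :=
  AddMonoidAlgebra.single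
    (Finsupp.single 0 e0 + Finsupp.single 1 e1 + Finsupp.single 2 e2) c

/-- The Laurent monomial `(−g)^m`, for `m : ℤ`. -/
def ngpow (m : ℤ) : S := mono 0 0 m (if Even m then 1 else -1)

/-- The index set of the variables `a_{ij}`, `i ≠ j`. -/
abbrev Vars (n : ℕ) := {p : Fin n × Fin n // p.1 ≠ p.2}

/-- The polynomial ring `F_S` over `S` in the variables `a_{ij}`. -/
abbrev FS (n : ℕ) := MvPolynomial (Vars n) S

/-- The generator `a_{ij}` (junk value `0` if `i = j`; all uses below have `i ≠ j`). -/
def av (n : ℕ) (i j : Fin n) : FS n :=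
  if h : i ≠ j then MvPolynomial.X ⟨(i, j), h⟩ else 0

/-- The image of the generator `a_{ij}` under `φ_{σ_k}`, where `K, K1` stand for the
strands `k, k+1`. -/
def phiGen (n : ℕ) (K K1 : Fin n) (i j : Fin n) : FS n :=
  if i = K ∧ j = K1 then -(av n K1 K)
  else if i = K1 ∧ j = K then -(av n K K1)
  else if i = K then av n K1 j - av n K1 K * av n K j
  else if i = K1 then av n K j
  else if j = K then av n i K1 - av n i K * av n K K1
  else if j = K1 then av n i K
  else av n i j

/-- The algebra endomorphism `φ_{σ_k}`. -/
def phi (n : ℕ) (K K1 : Fin n) : FS n →ₐ[S] FS n :=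
  MvPolynomial.aeval fun v => phiGen n K K1 v.1.1 v.1.2

/-- The permutation `π(w) = s_{k₁} ∘ ⋯ ∘ s_{k_ℓ}` of a positive braid word. -/
def permWord (n : ℕ) : List {k : ℕ // k + 1 < n} → Equiv.Perm (Fin n)
  | [] => 1
  | k :: w => Equiv.swap ⟨k.1, by have := k.2; omega⟩ ⟨k.1 + 1, k.2⟩ * permWord n w

/-- The matrix `Φ^L_{σ_k}`. -/
def PhiLgen (n : ℕ) (K K1 : Fin n) : Matrix (Fin n) (Fin n) (FS n) :=
  Matrix.of fun i j =>
    if i = K ∧ j = K then -(av n K1 K)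
    else if i = K ∧ j = K1 then 1
    else if i = K1 ∧ j = K then 1
    else if i = K1 ∧ j = K1 then 0
    else if i = j then 1 else 0

/-- The matrix `Φ^R_{σ_k}`. -/
def PhiRgen (n : ℕ) (K K1 : Fin n) : Matrix (Fin n) (Fin n) (FS n) :=
  Matrix.of fun i j =>
    if i = K ∧ j = K then -(av n K K1)
    else if i = K ∧ j = K1 then 1
    else if i = K1 ∧ j = K then 1
    else if i = K1 ∧ j = K1 then 0
    else if i = j then 1 else 0

/-- `Φ^L` of the empty word is the identity, and `Φ^L_{σ_k w'} = φ_{σ_k}(Φ^L_{w'})·Φ^L_{σ_k}`. -/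
def PhiL (n : ℕ) : List {k : ℕ // k + 1 < n} → Matrix (Fin n) (Fin n) (FS n)
  | [] => 1
  | k :: w =>
      (PhiL n w).map (phi n ⟨k.1, by have := k.2; omega⟩ ⟨k.1 + 1, k.2⟩) *
        PhiLgen n ⟨k.1, by have := k.2; omega⟩ ⟨k.1 + 1, k.2⟩

/-- `Φ^R` of the empty word is the identity, and `Φ^R_{σ_k w'} = Φ^R_{σ_k}·φ_{σ_k}(Φ^R_{w'})`. -/
def PhiR (n : ℕ) : List {k : ℕ // k + 1 < n} → Matrix (Fin n) (Fin n) (FS n)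
  | [] => 1
  | k :: w =>
      PhiRgen n ⟨k.1, by have := k.2; omega⟩ ⟨k.1 + 1, k.2⟩ *
        (PhiR n w).map (phi n ⟨k.1, by have := k.2; omega⟩ ⟨k.1 + 1, k.2⟩)

/-- The matrix `τ(A)`, with diagonal entries `1 − ν^{−2}`, entries `a_{ij}` for `i < j`
and `−ν^{−2}·a_{ij}` for `i > j`. -/
def AS (n : ℕ) : Matrix (Fin n) (Fin n) (FS n) :=
  Matrix.of fun i j =>
    if i = j then 1 - MvPolynomial.C (mono (-2) 0 0 1)
    else if i < j then av n i j
    else -(MvPolynomial.C (mono (-2) 0 0 1) * av n i j)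

/-- The matrix `τ(Â)`, with diagonal entries `g^{−2} − ν^{−2}`, entries `g^{−2}·a_{ij}`
for `i < j` and `−ν^{−2}·a_{ij}` for `i > j`. -/
def AhatS (n : ℕ) : Matrix (Fin n) (Fin n) (FS n) :=
  Matrix.of fun i j =>
    if i = j then MvPolynomial.C (mono 0 0 (-2) 1) - MvPolynomial.C (mono (-2) 0 0 1)
    else if i < j then MvPolynomial.C (mono 0 0 (-2) 1) * av n i j
    else -(MvPolynomial.C (mono (-2) 0 0 1) * av n i j)

/-- `Λ_mat = diag(−Λ^{−1}ν^{−2wr}g^{wr−n}, 1, …, 1)`. -/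
def Lmat (n : ℕ) (wr : ℤ) : Matrix (Fin n) (Fin n) (FS n) :=
  Matrix.diagonal fun i =>
    if (i : ℕ) = 0 then MvPolynomial.C (mono (-2 * wr) (-1) (wr - n) (-1)) else 1

/-- `Λ_mat^{−1} = diag(−Λν^{2wr}g^{n−wr}, 1, …, 1)`. -/
def LmatInv (n : ℕ) (wr : ℤ) : Matrix (Fin n) (Fin n) (FS n) :=
  Matrix.diagonal fun i =>
    if (i : ℕ) = 0 then MvPolynomial.C (mono (2 * wr) 1 ((n : ℤ) - wr) (-1)) else 1

/-- `Λ' = diag(Λ^{−1}ν^{−2wr}(−g)^{wr}, 1, …, 1)`. -/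
def Lp (n : ℕ) (wr : ℤ) : Matrix (Fin n) (Fin n) (FS n) :=
  Matrix.diagonal fun i =>
    if (i : ℕ) = 0 then
      MvPolynomial.C (mono (-2 * wr) (-1) wr (if Even wr then 1 else -1)) else 1

/-- `(Λ')^{−1} = diag(Λν^{2wr}(−g)^{−wr}, 1, …, 1)`. -/
def LpInv (n : ℕ) (wr : ℤ) : Matrix (Fin n) (Fin n) (FS n) :=
  Matrix.diagonal fun i =>
    if (i : ℕ) = 0 then
      MvPolynomial.C (mono (2 * wr) 1 (-wr) (if Even wr then 1 else -1)) else 1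

/-- The `S`-algebra automorphism `Ψ` with `Ψ(a_{ij}) = (−g)^{d(i)−d(j)}·a_{ij}`. -/
def Psi (n : ℕ) (d : Fin n → ℤ) : FS n →ₐ[S] FS n :=
  MvPolynomial.aeval fun v =>
    MvPolynomial.C (ngpow (d v.1.1 - d v.1.2)) * MvPolynomial.X v

/-- The element `g` of `F_S`. -/
def gElt (n : ℕ) : FS n := MvPolynomial.C (mono 0 0 1 1)

/-- The ideal of `F_S` generated by all entries of two matrices. -/
def entriesIdeal (n : ℕ) (M N : Matrix (Fin n) (Fin n) (FS n)) : Ideal (FS n) :=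
  Ideal.span ({x | ∃ i j, x = M i j} ∪ {x | ∃ i j, x = N i j})

namespace KCH13

open MvPolynomial Matrix

lemma mono_mul (a b c : ℤ) (x : ℂ) (a' b' c' : ℤ) (y : ℂ) :
    mono a b c x * mono a' b' c' y = mono (a + a') (b + b') (c + c') (x * y) := by
  unfold mono
  rw [AddMonoidAlgebra.single_mul_single]
  congr 1
  simp only [Finsupp.single_add]
  abel

lemma mono_one : mono 0 0 0 1 = (1 : S) := by
  unfold mono
  simp [AddMonoidAlgebra.one_def]

lemma eps_mul (a b : ℤ) :
    (if Even a then (1:ℂ) else -1) * (if Even b then (1:ℂ) else -1)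
      = if Even (a + b) then (1:ℂ) else -1 := by
  by_cases ha : Even a <;> by_cases hb : Even b <;>
    simp [Int.even_add, ha, hb]

lemma ngpow_add (a b : ℤ) : ngpow a * ngpow b = ngpow (a + b) := by
  unfold ngpow
  rw [mono_mul, eps_mul]
  norm_num

lemma ngpow_zero : ngpow 0 = (1 : S) := by
  unfold ngpow
  simp [mono_one]

variable {n : ℕ}

lemma ngC_mul (a b c : ℤ) (hc : a + b = c) :
    (MvPolynomial.C (ngpow a) : FS n) * MvPolynomial.C (ngpow b) = MvPolynomial.C (ngpow c) := by
  rw [← _root_.map_mul, ngpow_add, hc]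

lemma ngC_zero : (MvPolynomial.C (ngpow 0) : FS n) = 1 := by rw [ngpow_zero, _root_.map_one]

lemma Psi_C (d : Fin n → ℤ) (s : S) : Psi n d (MvPolynomial.C s) = MvPolynomial.C s := by
  simp [Psi, MvPolynomial.algebraMap_eq]

lemma Psi_av (d : Fin n → ℤ) (i j : Fin n) :
    Psi n d (av n i j) = MvPolynomial.C (ngpow (d i - d j)) * av n i j := by
  unfold av
  split_ifs with hij
  · simp [Psi]
  · simp


-- Ψ and φ commutation
lemma Psi_phiGen (d : Fin n → ℤ) (K K1 : Fin n) (hK : K ≠ K1) (i j : Fin n) (hij : i ≠ j) :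
    Psi n d (phiGen n K K1 i j)
      = MvPolynomial.C (ngpow (d (Equiv.swap K K1 i) - d (Equiv.swap K K1 j)))
          * phiGen n K K1 i j := by
  unfold phiGen
  split_ifs with h1 h2 h3 h4 h5 h6
  · rw [h1.1, h1.2, Equiv.swap_apply_left, Equiv.swap_apply_right]
    simp only [map_neg, Psi_av]
    ring
  · rw [h2.1, h2.2, Equiv.swap_apply_right, Equiv.swap_apply_left]
    simp only [map_neg, Psi_av]
    ring
  · have hjK : j ≠ K := fun e => hij (h3.trans e.symm)
    have hjK1 : j ≠ K1 := fun e => h1 ⟨h3, e⟩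
    rw [h3, Equiv.swap_apply_left, Equiv.swap_apply_of_ne_of_ne hjK hjK1]
    simp only [map_sub, _root_.map_mul, Psi_av]
    linear_combination (-(av n K1 K * av n K j)) *
      ngC_mul (d K1 - d K) (d K - d j) (d K1 - d j) (by ring)
  · have hjK : j ≠ K := fun e => h2 ⟨h4, e⟩
    have hjK1 : j ≠ K1 := fun e => hij (h4.trans e.symm)
    rw [h4, Equiv.swap_apply_right, Equiv.swap_apply_of_ne_of_ne hjK hjK1]
    simp only [Psi_av]
  · rw [h5, Equiv.swap_apply_left, Equiv.swap_apply_of_ne_of_ne h3 h4]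
    simp only [map_sub, _root_.map_mul, Psi_av]
    linear_combination (-(av n i K * av n K K1)) *
      ngC_mul (d i - d K) (d K - d K1) (d i - d K1) (by ring)
  · rw [h6, Equiv.swap_apply_right, Equiv.swap_apply_of_ne_of_ne h3 h4]
    simp only [Psi_av]
  · rw [Equiv.swap_apply_of_ne_of_ne h3 h4, Equiv.swap_apply_of_ne_of_ne h5 h6]
    simp only [Psi_av]

lemma Psi_phi_comm (d : Fin n → ℤ) (K K1 : Fin n) (hK : K ≠ K1) :
    (Psi n d).comp (phi n K K1)
      = (phi n K K1).comp (Psi n (fun i => d (Equiv.swap K K1 i))) := by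
  apply MvPolynomial.algHom_ext
  intro v
  simp only [AlgHom.comp_apply, Psi, phi, MvPolynomial.aeval_X, _root_.map_mul,
    MvPolynomial.aeval_C, MvPolynomial.algebraMap_eq]
  exact Psi_phiGen d K K1 hK v.1.1 v.1.2 v.2

lemma sandwich (a b c : ℤ) (h : a + b = c) (x : FS n) :
    MvPolynomial.C (ngpow a) * x * MvPolynomial.C (ngpow b)
      = MvPolynomial.C (ngpow c) * x := by
  rw [show MvPolynomial.C (ngpow a) * x * MvPolynomial.C (ngpow b)
      = (MvPolynomial.C (ngpow a) * MvPolynomial.C (ngpow b)) * x from by ring,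
    ngC_mul a b c h]

lemma sandwich0 (a b : ℤ) (h : a + b = 0) (x : FS n) :
    MvPolynomial.C (ngpow a) * x * MvPolynomial.C (ngpow b) = x := by
  rw [sandwich a b 0 h, ngC_zero, one_mul]

/-- Diagonal matrix with entries `(−g)^{e i}`. -/
def Dm (n : ℕ) (e : Fin n → ℤ) : Matrix (Fin n) (Fin n) (FS n) :=
  Matrix.diagonal fun i => MvPolynomial.C (ngpow (e i))

lemma Dm_mul_Dm (e f : Fin n → ℤ) :
    Dm n e * Dm n f = Dm n (fun i => e i + f i) := by
  unfold Dm
  rw [Matrix.diagonal_mul_diagonal]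
  exact congrArg _ (funext fun i => ngC_mul _ _ _ rfl)

lemma Dm_const0 (e : Fin n → ℤ) (he : ∀ i, e i = 0) : Dm n e = 1 := by
  unfold Dm
  rw [show (fun i => MvPolynomial.C (ngpow (e i)) : Fin n → FS n) = fun _ => 1 from
    funext fun i => by rw [he i, ngC_zero], Matrix.diagonal_one]

lemma Dm_neg_cancel (e : Fin n → ℤ) : Dm n (fun i => - e i) * Dm n e = 1 := by
  rw [Dm_mul_Dm]; exact Dm_const0 _ fun i => by ring

lemma Dm_cancel_neg (e : Fin n → ℤ) : Dm n e * Dm n (fun i => - e i) = 1 := by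
  rw [Dm_mul_Dm]; exact Dm_const0 _ fun i => by ring

lemma mapA_mul (f : FS n →ₐ[S] FS n) (M N : Matrix (Fin n) (Fin n) (FS n)) :
    (M * N).map ⇑f = M.map ⇑f * N.map ⇑f :=
  Matrix.map_mul (f := f.toRingHom)

lemma mapA_sub (f : FS n →ₐ[S] FS n) (M N : Matrix (Fin n) (Fin n) (FS n)) :
    (M - N).map ⇑f = M.map ⇑f - N.map ⇑f := by
  ext i j
  simp [Matrix.map_apply, Matrix.sub_apply]

lemma mapA_one (f : FS n →ₐ[S] FS n) :
    (1 : Matrix (Fin n) (Fin n) (FS n)).map ⇑f = 1 :=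
  Matrix.map_one _ (map_zero f) (_root_.map_one f)

lemma Dm_map_phi (e : Fin n → ℤ) (K K1 : Fin n) :
    (Dm n e).map ⇑(phi n K K1) = Dm n e := by
  unfold Dm
  rw [Matrix.diagonal_map (map_zero _)]
  exact congrArg _ (funext fun i => by
    simp [phi, MvPolynomial.aeval_C, MvPolynomial.algebraMap_eq])

lemma DmmD_apply (e f : Fin n → ℤ) (M : Matrix (Fin n) (Fin n) (FS n)) (i j : Fin n) :
    (Dm n e * M * Dm n f) i j
      = MvPolynomial.C (ngpow (e i)) * M i j * MvPolynomial.C (ngpow (f j)) := by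
  unfold Dm
  rw [Matrix.mul_diagonal, Matrix.diagonal_mul]

lemma Psi_PhiLgen (d : Fin n → ℤ) (K K1 : Fin n) :
    (PhiLgen n K K1).map ⇑(Psi n d)
      = Dm n (fun i => d (Equiv.swap K K1 i)) * PhiLgen n K K1 * Dm n (fun i => - d i) := by
  refine Matrix.ext fun i j => ?_
  rw [Matrix.map_apply, DmmD_apply]
  unfold PhiLgen
  simp only [Matrix.of_apply]
  split_ifs with h1 h2 h3 h4 h5
  · rw [h1.1, h1.2, Equiv.swap_apply_left, map_neg, Psi_av,
      sandwich (d K1) (-(d K)) (d K1 - d K) (by ring)]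
    ring
  · rw [h2.1, h2.2, Equiv.swap_apply_left, _root_.map_one,
      sandwich0 (d K1) (-(d K1)) (by ring)]
  · rw [h3.1, h3.2, Equiv.swap_apply_right, _root_.map_one,
      sandwich0 (d K) (-(d K)) (by ring)]
  · rw [map_zero, mul_zero, zero_mul]
  · subst h5
    have hiK : i ≠ K := fun e => h1 ⟨e, e⟩
    have hiK1 : i ≠ K1 := fun e => h4 ⟨e, e⟩
    rw [Equiv.swap_apply_of_ne_of_ne hiK hiK1, _root_.map_one,
      sandwich0 (d i) (-(d i)) (by ring)]
  · rw [map_zero, mul_zero, zero_mul]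

lemma Psi_PhiRgen (d : Fin n → ℤ) (K K1 : Fin n) :
    (PhiRgen n K K1).map ⇑(Psi n d)
      = Dm n d * PhiRgen n K K1 * Dm n (fun j => - d (Equiv.swap K K1 j)) := by
  refine Matrix.ext fun i j => ?_
  rw [Matrix.map_apply, DmmD_apply]
  unfold PhiRgen
  simp only [Matrix.of_apply]
  split_ifs with h1 h2 h3 h4 h5
  · rw [h1.1, h1.2, Equiv.swap_apply_left, map_neg, Psi_av,
      sandwich (d K) (-(d K1)) (d K - d K1) (by ring)]
    ring
  · rw [h2.1, h2.2, Equiv.swap_apply_right, _root_.map_one,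
      sandwich0 (d K) (-(d K)) (by ring)]
  · rw [h3.1, h3.2, Equiv.swap_apply_left, _root_.map_one,
      sandwich0 (d K1) (-(d K1)) (by ring)]
  · rw [map_zero, mul_zero, zero_mul]
  · subst h5
    have hjK : i ≠ K := fun e => h1 ⟨e, e⟩
    have hjK1 : i ≠ K1 := fun e => h4 ⟨e, e⟩
    rw [Equiv.swap_apply_of_ne_of_ne hjK hjK1, _root_.map_one,
      sandwich0 (d i) (-(d i)) (by ring)]
  · rw [map_zero, mul_zero, zero_mul]

lemma Psi_PhiL (w : List {k : ℕ // k + 1 < n}) :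
    ∀ d : Fin n → ℤ,
      (PhiL n w).map ⇑(Psi n d)
        = Dm n (fun i => d (permWord n w i)) * PhiL n w * Dm n (fun i => - d i) := by
  induction w with
  | nil =>
      intro d
      rw [show PhiL n [] = 1 from rfl, mapA_one, show permWord n [] = 1 from rfl]
      simp only [Equiv.Perm.one_apply]
      rw [mul_one]
      exact (Dm_cancel_neg d).symm
  | cons k w ih =>
      intro d
      set K : Fin n := ⟨k.1, by have := k.2; omega⟩ with hKdef
      set K1 : Fin n := ⟨k.1 + 1, k.2⟩ with hK1def
      have hK : K ≠ K1 := by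
        simp only [hKdef, hK1def, ne_eq, Fin.mk.injEq]
        omega
      have hstep : PhiL n (k :: w) = (PhiL n w).map ⇑(phi n K K1) * PhiLgen n K K1 := rfl
      rw [hstep, mapA_mul, Matrix.map_map, ← AlgHom.coe_comp, Psi_phi_comm d K K1 hK,
        AlgHom.coe_comp, ← Matrix.map_map, ih, mapA_mul, mapA_mul, Dm_map_phi, Dm_map_phi,
        Psi_PhiLgen]
      have hperm : (fun i => d (Equiv.swap K K1 (permWord n w i)))
          = fun i => d (permWord n (k :: w) i) := by
        funext i
        have : permWord n (k :: w) i = Equiv.swap K K1 (permWord n w i) := rfl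
        rw [this]
      rw [hperm]
      have hcanc : ∀ X : Matrix (Fin n) (Fin n) (FS n),
          Dm n (fun i => -(d (Equiv.swap K K1 i)))
            * (Dm n (fun i => d (Equiv.swap K K1 i)) * X) = X := fun X => by
        rw [← Matrix.mul_assoc, Dm_neg_cancel, Matrix.one_mul]
      simp only [Matrix.mul_assoc]
      rw [hcanc]

lemma Psi_PhiR (w : List {k : ℕ // k + 1 < n}) :
    ∀ d : Fin n → ℤ,
      (PhiR n w).map ⇑(Psi n d)
        = Dm n d * PhiR n w * Dm n (fun j => - d (permWord n w j)) := by
  induction w with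
  | nil =>
      intro d
      rw [show PhiR n [] = 1 from rfl, mapA_one, show permWord n [] = 1 from rfl]
      simp only [Equiv.Perm.one_apply]
      rw [mul_one]
      exact (Dm_cancel_neg d).symm
  | cons k w ih =>
      intro d
      set K : Fin n := ⟨k.1, by have := k.2; omega⟩ with hKdef
      set K1 : Fin n := ⟨k.1 + 1, k.2⟩ with hK1def
      have hK : K ≠ K1 := by
        simp only [hKdef, hK1def, ne_eq, Fin.mk.injEq]
        omega
      have hstep : PhiR n (k :: w) = PhiRgen n K K1 * (PhiR n w).map ⇑(phi n K K1) := rfl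
      rw [hstep, mapA_mul, Matrix.map_map, ← AlgHom.coe_comp, Psi_phi_comm d K K1 hK,
        AlgHom.coe_comp, ← Matrix.map_map, ih, mapA_mul, mapA_mul, Dm_map_phi, Dm_map_phi,
        Psi_PhiRgen]
      have hperm : (fun j => -(d (Equiv.swap K K1 (permWord n w j))))
          = fun j => - d (permWord n (k :: w) j) := by
        funext j
        have : permWord n (k :: w) j = Equiv.swap K K1 (permWord n w j) := rfl
        rw [this]
      rw [hperm]
      have hcanc : ∀ X : Matrix (Fin n) (Fin n) (FS n),
          Dm n (fun i => -(d (Equiv.swap K K1 i)))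
            * (Dm n (fun i => d (Equiv.swap K K1 i)) * X) = X := fun X => by
        rw [← Matrix.mul_assoc, Dm_neg_cancel, Matrix.one_mul]
      simp only [Matrix.mul_assoc]
      rw [hcanc]

lemma Psi_AS (d : Fin n → ℤ) :
    (AS n).map ⇑(Psi n d) = Dm n d * AS n * Dm n (fun i => - d i) := by
  refine Matrix.ext fun i j => ?_
  rw [Matrix.map_apply, DmmD_apply]
  unfold AS
  simp only [Matrix.of_apply]
  split_ifs with h1 h2
  · subst h1
    rw [map_sub, _root_.map_one, Psi_C, sandwich0 (d i) (-(d i)) (by ring)]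
  · rw [Psi_av, sandwich (d i) (-(d j)) (d i - d j) (by ring)]
  · rw [map_neg, _root_.map_mul, Psi_C, Psi_av,
      sandwich (d i) (-(d j)) (d i - d j) (by ring)]
    ring

lemma Psi_AhatS (d : Fin n → ℤ) :
    (AhatS n).map ⇑(Psi n d) = Dm n d * AhatS n * Dm n (fun i => - d i) := by
  refine Matrix.ext fun i j => ?_
  rw [Matrix.map_apply, DmmD_apply]
  unfold AhatS
  simp only [Matrix.of_apply]
  split_ifs with h1 h2
  · subst h1
    rw [map_sub, Psi_C, Psi_C, sandwich0 (d i) (-(d i)) (by ring)]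
  · rw [_root_.map_mul, Psi_C, Psi_av, sandwich (d i) (-(d j)) (d i - d j) (by ring)]
    ring
  · rw [map_neg, _root_.map_mul, Psi_C, Psi_av,
      sandwich (d i) (-(d j)) (d i - d j) (by ring)]
    ring

lemma Psi_diag_ifC (d : Fin n → ℤ) (s : S) :
    (Matrix.diagonal fun i : Fin n =>
        if (i : ℕ) = 0 then (MvPolynomial.C s : FS n) else 1).map ⇑(Psi n d)
      = Matrix.diagonal fun i : Fin n =>
          if (i : ℕ) = 0 then (MvPolynomial.C s : FS n) else 1 := by
  rw [Matrix.diagonal_map (map_zero _)]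
  exact congrArg _ (funext fun i => by
    by_cases h : (i : ℕ) = 0 <;> simp [h, Psi_C])

lemma Psi_Lmat (d : Fin n → ℤ) (wr : ℤ) : (Lmat n wr).map ⇑(Psi n d) = Lmat n wr := by
  unfold Lmat; exact Psi_diag_ifC d _

lemma Psi_LmatInv (d : Fin n → ℤ) (wr : ℤ) :
    (LmatInv n wr).map ⇑(Psi n d) = LmatInv n wr := by
  unfold LmatInv; exact Psi_diag_ifC d _

lemma mono_eq {a b c a' b' c' : ℤ} {x x' : ℂ} (h1 : a = a') (h2 : b = b')
    (h3 : c = c') (h4 : x = x') : mono a b c x = mono a' b' c' x' := by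
  rw [h1, h2, h3, h4]

lemma mono_neg (a b c : ℤ) (x : ℂ) : mono a b c (-x) = - mono a b c x := by
  unfold mono
  exact AddMonoidAlgebra.single_neg _ _

lemma scalar1 (W nn : ℤ) (hpar : Even (nn - 1) ↔ Even W) :
    mono (-2*W) (-1) (W - nn) (-1) * ngpow (nn - 1)
      = mono 0 0 (-1) (-1) * mono (-2*W) (-1) W (if Even W then 1 else -1) := by
  unfold ngpow
  rw [mono_mul, mono_mul]
  exact mono_eq (by ring) (by ring) (by ring)
    (by rw [if_congr hpar rfl rfl])

lemma scalar2 (X : ℤ) : ngpow (X - 1) = mono 0 0 (-1) (-1) * ngpow X := by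
  unfold ngpow
  rw [mono_mul]
  refine mono_eq (by ring) (by ring) (by ring) ?_
  by_cases hX : Even X <;> simp [Int.even_sub_one, hX]

lemma scalar3 (W nn : ℤ) (hpar : Even (nn - 1) ↔ Even W) :
    ngpow (-(nn - 1)) * mono (2*W) 1 (nn - W) (-1)
      = mono 0 0 1 (-1) * mono (2*W) 1 (-W) (if Even W then 1 else -1) := by
  unfold ngpow
  rw [mono_mul, mono_mul]
  refine mono_eq (by ring) (by ring) (by ring) ?_
  rw [if_congr ((even_neg).trans hpar) rfl rfl]
  ring

lemma scalar4 (X : ℤ) : ngpow (-(X - 1)) = mono 0 0 1 (-1) * ngpow (-X) := by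
  unfold ngpow
  rw [mono_mul]
  refine mono_eq (by ring) (by ring) (by ring) ?_
  have h1 : Even (-(X-1)) ↔ ¬ Even (-X) := by
    rw [even_neg, even_neg, Int.even_sub_one]
  by_cases hX : Even (-X)
  · rw [if_pos hX, if_neg (by rw [h1]; exact not_not_intro hX)]
    try ring
  · rw [if_neg hX, if_pos (h1.mpr hX)]
    try ring

lemma Sunit (c c' : S) (hcc : c * c' = 1) (a b a' b' : ℤ)
    (ha : a + a' = 0) (hb : b + b' = 0) :
    (c * (ngpow a * ngpow b)) * (c' * (ngpow a' * ngpow b')) = 1 := by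
  have h1 : ngpow a * ngpow a' = 1 := by rw [ngpow_add, ha, ngpow_zero]
  have h2 : ngpow b * ngpow b' = 1 := by rw [ngpow_add, hb, ngpow_zero]
  calc (c * (ngpow a * ngpow b)) * (c' * (ngpow a' * ngpow b'))
      = (c * c') * ((ngpow a * ngpow a') * (ngpow b * ngpow b')) := by ring
    _ = 1 := by rw [hcc, h1, h2, mul_one, mul_one]

lemma hcc1 : mono 0 0 1 1 * mono 0 0 (-1) 1 = (1:S) := by
  rw [mono_mul]
  norm_num [mono_one]

lemma hneg1 : (MvPolynomial.C (mono 0 0 (-1) (-1)) : FS n)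
    = - MvPolynomial.C (mono 0 0 (-1) 1) := by
  rw [show mono 0 0 (-1) (-1:ℂ) = - mono 0 0 (-1) 1 from by
    rw [← mono_neg], map_neg]

lemma hneg2 : (MvPolynomial.C (mono 0 0 1 (-1)) : FS n)
    = - MvPolynomial.C (mono 0 0 1 1) := by
  rw [show mono 0 0 1 (-1:ℂ) = - mono 0 0 1 1 from by
    rw [← mono_neg], map_neg]

set_option maxHeartbeats 1000000 in
set_option synthInstance.maxHeartbeats 200000 in
theorem ideal_aux (n : ℕ) (w : List {k : ℕ // k + 1 < n}) (z : Fin n)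
    (hz0 : (z : ℕ) = 0) (d : Fin n → ℤ) (hdz : d z = 0)
    (hdstep : ∀ i, i ≠ z → d (permWord n w i) = d i - 1)
    (hdtop : d (permWord n w z) = (n : ℤ) - 1)
    (hpar : Even ((n:ℤ) - 1) ↔ Even ((w.length : ℤ))) :
    Ideal.map (Psi n d)
        (entriesIdeal n
          (AhatS n - Lmat n (w.length : ℤ) * PhiL n w * AS n)
          (AS n - AhatS n * PhiR n w * LmatInv n (w.length : ℤ)))
      = entriesIdeal n
          (gElt n • AhatS n + Lp n (w.length : ℤ) * PhiL n w * AS n)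
          (AS n + gElt n • (AhatS n * PhiR n w * LpInv n (w.length : ℤ))) := by
  set W : ℤ := (w.length : ℤ) with hW
  -- the two diagonal identities
  have hLD : Lmat n W * Dm n (fun i => d (permWord n w i))
      = - ((MvPolynomial.C (mono 0 0 (-1) 1) : FS n) • (Dm n d * Lp n W)) := by
    unfold Lmat Lp Dm
    rw [Matrix.diagonal_mul_diagonal, Matrix.diagonal_mul_diagonal]
    refine Matrix.ext fun i j => ?_
    by_cases hij : i = j
    · subst hij
      rw [Matrix.neg_apply, Matrix.smul_apply, Matrix.diagonal_apply_eq,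
        Matrix.diagonal_apply_eq, smul_eq_mul]
      have htest : -(MvPolynomial.C (mono 0 0 (-1) 1) * (MvPolynomial.C (ngpow (d i)) *
          (if (i:ℕ) = 0 then MvPolynomial.C (mono (-2 * W) (-1) W (if Even W then 1 else -1))
           else (1:FS n))))
          = MvPolynomial.C (mono 0 0 (-1) (-1)) * (MvPolynomial.C (ngpow (d i)) *
          (if (i:ℕ) = 0 then MvPolynomial.C (mono (-2 * W) (-1) W (if Even W then 1 else -1))
           else (1:FS n))) := by
        rw [hneg1]; ring
      rw [htest]
      beta_reduce
      by_cases h0 : (i : ℕ) = 0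
      · rw [if_pos h0, if_pos h0]
        have hiz : i = z := Fin.ext (by rw [h0, hz0])
        rw [hiz, hdtop, hdz, ngpow_zero, _root_.map_one, one_mul, ← _root_.map_mul,
          ← _root_.map_mul]
        exact congrArg _ (scalar1 W (n : ℤ) hpar)
      · rw [if_neg h0, if_neg h0, one_mul, mul_one]
        have hiz : i ≠ z := fun e => h0 (by rw [e, hz0])
        rw [hdstep i hiz, ← _root_.map_mul]
        exact congrArg _ (scalar2 (d i))
    · rw [Matrix.neg_apply, Matrix.smul_apply, smul_eq_mul, Matrix.diagonal_apply_ne _ hij,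
        Matrix.diagonal_apply_ne _ hij, mul_zero, neg_zero]
  have hRD : Dm n (fun j => - d (permWord n w j)) * LmatInv n W
      = - (gElt n • (LpInv n W * Dm n (fun j => - d j))) := by
    unfold LmatInv LpInv Dm
    rw [Matrix.diagonal_mul_diagonal, Matrix.diagonal_mul_diagonal]
    refine Matrix.ext fun i j => ?_
    by_cases hij : i = j
    · subst hij
      rw [Matrix.neg_apply, Matrix.smul_apply, Matrix.diagonal_apply_eq,
        Matrix.diagonal_apply_eq, smul_eq_mul]
      beta_reduce
      have htest2 : -(gElt n * ((if (i:ℕ) = 0 then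
            MvPolynomial.C (mono (2 * W) 1 (-W) (if Even W then 1 else -1)) else (1:FS n)) *
            MvPolynomial.C (ngpow (-d i))))
          = MvPolynomial.C (mono 0 0 1 (-1)) * ((if (i:ℕ) = 0 then
            MvPolynomial.C (mono (2 * W) 1 (-W) (if Even W then 1 else -1)) else (1:FS n)) *
            MvPolynomial.C (ngpow (-d i))) := by
        unfold gElt; rw [hneg2]; ring
      rw [htest2]
      by_cases h0 : (i : ℕ) = 0
      · rw [if_pos h0, if_pos h0]
        have hiz : i = z := Fin.ext (by rw [h0, hz0])
        rw [hiz, hdtop, hdz, neg_zero, ngpow_zero, _root_.map_one, mul_one, ← _root_.map_mul,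
          ← _root_.map_mul]
        exact congrArg _ (scalar3 W (n : ℤ) hpar)
      · rw [if_neg h0, if_neg h0, mul_one, one_mul]
        have hiz : i ≠ z := fun e => h0 (by rw [e, hz0])
        rw [hdstep i hiz, ← _root_.map_mul]
        exact congrArg _ (scalar4 (d i))
    · rw [Matrix.neg_apply, Matrix.smul_apply, smul_eq_mul, Matrix.diagonal_apply_ne _ hij,
        Matrix.diagonal_apply_ne _ hij, mul_zero, neg_zero]
  have hmid : ∀ X : Matrix (Fin n) (Fin n) (FS n),
      Dm n (fun i => - d i) * (Dm n d * X) = X := fun X => by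
    rw [← Matrix.mul_assoc, Dm_neg_cancel, Matrix.one_mul]
  have hcg : (MvPolynomial.C (mono 0 0 (-1) 1) : FS n) * gElt n = 1 := by
    unfold gElt
    rw [← _root_.map_mul, mono_mul]
    norm_num [mono_one]
  -- key matrix identity 1
  have key1 : (AhatS n - Lmat n W * PhiL n w * AS n).map ⇑(Psi n d)
      = (MvPolynomial.C (mono 0 0 (-1) 1) : FS n) •
          (Dm n d * ((gElt n • AhatS n + Lp n W * PhiL n w * AS n)
            * Dm n (fun i => - d i))) := by
    rw [mapA_sub, Psi_AhatS, mapA_mul, mapA_mul, Psi_Lmat, Psi_PhiL w d, Psi_AS]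
    simp only [Matrix.mul_assoc]
    rw [hmid]
    simp only [Matrix.add_mul, Matrix.mul_add, Matrix.smul_mul, Matrix.mul_smul, smul_smul,
      smul_add, Matrix.mul_assoc]
    rw [hcg, one_smul, sub_eq_add_neg]
    congr 1
    rw [← Matrix.mul_assoc (Lmat n W) (Dm n (fun i => d (permWord n w i))), hLD,
      Matrix.neg_mul, neg_neg, Matrix.smul_mul, Matrix.mul_assoc]
  -- key matrix identity 2
  have key2 : (AS n - AhatS n * PhiR n w * LmatInv n W).map ⇑(Psi n d)
      = Dm n d * ((AS n + gElt n • (AhatS n * PhiR n w * LpInv n W))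
          * Dm n (fun i => - d i)) := by
    rw [mapA_sub, Psi_AS, mapA_mul, mapA_mul, Psi_AhatS, Psi_PhiR w d, Psi_LmatInv]
    simp only [Matrix.mul_assoc]
    rw [hmid, hRD]
    simp only [Matrix.mul_neg, Matrix.mul_smul, sub_neg_eq_add]
    simp only [Matrix.add_mul, Matrix.mul_add, Matrix.smul_mul, Matrix.mul_smul,
      Matrix.mul_assoc]
  -- entrywise forms
  have e1 : ∀ i j, Psi n d ((AhatS n - Lmat n W * PhiL n w * AS n) i j)
      = MvPolynomial.C (mono 0 0 (-1) 1 * (ngpow (d i) * ngpow (- d j)))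
          * ((gElt n • AhatS n + Lp n W * PhiL n w * AS n) i j) := by
    intro i j
    have hk := congrArg (fun M : Matrix (Fin n) (Fin n) (FS n) => M i j) key1
    simp only [Matrix.map_apply] at hk
    rw [hk, Matrix.smul_apply, ← Matrix.mul_assoc, DmmD_apply, smul_eq_mul]
    simp only [_root_.map_mul]
    ring
  have e2 : ∀ i j, Psi n d ((AS n - AhatS n * PhiR n w * LmatInv n W) i j)
      = MvPolynomial.C ((1:S) * (ngpow (d i) * ngpow (- d j)))
          * ((AS n + gElt n • (AhatS n * PhiR n w * LpInv n W)) i j) := by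
    intro i j
    have hk := congrArg (fun M : Matrix (Fin n) (Fin n) (FS n) => M i j) key2
    simp only [Matrix.map_apply] at hk
    rw [hk, ← Matrix.mul_assoc, DmmD_apply]
    simp only [_root_.map_mul, _root_.map_one]
    ring
  -- inverse coefficients
  have einv1 : ∀ i j, ((gElt n • AhatS n + Lp n W * PhiL n w * AS n) i j)
      = MvPolynomial.C (mono 0 0 1 1 * (ngpow (- d i) * ngpow (d j)))
          * Psi n d ((AhatS n - Lmat n W * PhiL n w * AS n) i j) := by
    intro i j
    rw [e1 i j, ← mul_assoc, ← _root_.map_mul,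
      Sunit _ _ hcc1 (- d i) (d j) (d i) (- d j) (by ring) (by ring),
      _root_.map_one, one_mul]
  have einv2 : ∀ i j, ((AS n + gElt n • (AhatS n * PhiR n w * LpInv n W)) i j)
      = MvPolynomial.C ((1:S) * (ngpow (- d i) * ngpow (d j)))
          * Psi n d ((AS n - AhatS n * PhiR n w * LmatInv n W) i j) := by
    intro i j
    rw [e2 i j, ← mul_assoc, ← _root_.map_mul,
      Sunit _ _ (one_mul 1) (- d i) (d j) (d i) (- d j) (by ring) (by ring),
      _root_.map_one, one_mul]
  -- ideal computation
  unfold entriesIdeal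
  rw [Ideal.map_span]
  apply le_antisymm
  · rw [Ideal.span_le]
    rintro x ⟨y, hy | hy, rfl⟩
    · obtain ⟨i, j, rfl⟩ := hy
      rw [SetLike.mem_coe, e1 i j]
      exact Ideal.mul_mem_left _ _
        (Ideal.subset_span (Set.mem_union_left _ ⟨i, j, rfl⟩))
    · obtain ⟨i, j, rfl⟩ := hy
      rw [SetLike.mem_coe, e2 i j]
      exact Ideal.mul_mem_left _ _
        (Ideal.subset_span (Set.mem_union_right _ ⟨i, j, rfl⟩))
  · rw [Ideal.span_le]
    rintro x (hx | hx)
    · obtain ⟨i, j, rfl⟩ := hx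
      rw [SetLike.mem_coe, einv1 i j]
      exact Ideal.mul_mem_left _ _
        (Ideal.subset_span ⟨_, Set.mem_union_left _ ⟨i, j, rfl⟩, rfl⟩)
    · obtain ⟨i, j, rfl⟩ := hx
      rw [SetLike.mem_coe, einv2 i j]
      exact Ideal.mul_mem_left _ _
        (Ideal.subset_span ⟨_, Set.mem_union_right _ ⟨i, j, rfl⟩, rfl⟩)

lemma perm_pow_succ (p : Equiv.Perm (Fin n)) (m : ℕ) (i : Fin n) :
    (p ^ (m + 1)) i = (p ^ m) (p i) := by
  rw [pow_succ, Equiv.Perm.mul_apply]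

lemma sign_permWord (w : List {k : ℕ // k + 1 < n}) :
    Equiv.Perm.sign (permWord n w) = (-1) ^ w.length := by
  induction w with
  | nil => simp [permWord]
  | cons k w ih =>
      have hK : (⟨k.1, by have := k.2; omega⟩ : Fin n) ≠ ⟨k.1 + 1, k.2⟩ := by
        simp only [ne_eq, Fin.mk.injEq]; omega
      rw [show permWord n (k :: w)
          = Equiv.swap (⟨k.1, by have := k.2; omega⟩ : Fin n) ⟨k.1 + 1, k.2⟩ * permWord n w
          from rfl, _root_.map_mul, Equiv.Perm.sign_swap hK, ih, List.length_cons, pow_succ]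
      exact mul_comm _ _

set_option maxHeartbeats 1000000 in
theorem main_aux (n : ℕ) (hn : 2 ≤ n) (w : List {k : ℕ // k + 1 < n})
    (h : ∀ i j : Fin n, ∃ m : ℕ, ((permWord n w) ^ m) i = j) (z : Fin n)
    (hz0 : (z : ℕ) = 0) :
    Ideal.map (Psi n fun i => (Nat.find (h i z) : ℤ))
        (entriesIdeal n
          (AhatS n - Lmat n (w.length : ℤ) * PhiL n w * AS n)
          (AS n - AhatS n * PhiR n w * LmatInv n (w.length : ℤ)))
      = entriesIdeal n
          (gElt n • AhatS n + Lp n (w.length : ℤ) * PhiL n w * AS n)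
          (AS n + gElt n • (AhatS n * PhiR n w * LpInv n (w.length : ℤ))) := by
  have hspec : ∀ i : Fin n, ((permWord n w) ^ (Nat.find (h i z))) i = z :=
    fun i => Nat.find_spec (h i z)
  have hdz : Nat.find (h z z) = 0 := by
    have h0 : ((permWord n w) ^ 0) z = z := by simp
    exact Nat.le_zero.mp (Nat.find_le h0)
  have hne0 : ∀ i : Fin n, i ≠ z → Nat.find (h i z) ≠ 0 := by
    intro i hi hc
    have hx := hspec i
    rw [hc, pow_zero] at hx
    exact hi hx
  have hstep : ∀ i : Fin n, i ≠ z →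
      (Nat.find (h (permWord n w i) z) : ℤ) = (Nat.find (h i z) : ℤ) - 1 := by
    intro i hi
    have hpos : 1 ≤ Nat.find (h i z) := Nat.one_le_iff_ne_zero.mpr (hne0 i hi)
    have e1 : ((permWord n w) ^ (Nat.find (h i z) - 1)) (permWord n w i) = z := by
      have hp := perm_pow_succ (permWord n w) (Nat.find (h i z) - 1) i
      rw [Nat.sub_add_cancel hpos] at hp
      rw [← hp]; exact hspec i
    have h1 : Nat.find (h (permWord n w i) z) ≤ Nat.find (h i z) - 1 := Nat.find_le e1
    have e2 : ((permWord n w) ^ (Nat.find (h (permWord n w i) z) + 1)) i = z := by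
      rw [perm_pow_succ]; exact hspec (permWord n w i)
    have h2 : Nat.find (h i z) ≤ Nat.find (h (permWord n w i) z) + 1 := Nat.find_le e2
    omega
  have hex : ∃ t : ℕ, 0 < t ∧ ((permWord n w) ^ t) z = z := by
    refine ⟨orderOf (permWord n w), orderOf_pos _, ?_⟩
    rw [pow_orderOf_eq_one]; simp
  have htpos : 0 < Nat.find hex := (Nat.find_spec hex).1
  have htz : ((permWord n w) ^ (Nat.find hex)) z = z := (Nat.find_spec hex).2
  have hmin : ∀ s, 0 < s → s < Nat.find hex → ((permWord n w) ^ s) z ≠ z :=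
    fun s hs1 hs2 hc => Nat.find_min hex hs2 ⟨hs1, hc⟩
  have hred : ∀ q r : ℕ,
      ((permWord n w) ^ (q * Nat.find hex + r)) z = ((permWord n w) ^ r) z := by
    intro q r
    induction q with
    | zero => simp
    | succ q ihq =>
        have he : (q + 1) * Nat.find hex + r = (q * Nat.find hex + r) + Nat.find hex := by
          ring
        rw [he, pow_add, Equiv.Perm.mul_apply, htz]
        exact ihq
  have hinj2 : ∀ a b : ℕ, a < b → b < Nat.find hex →
      ((permWord n w) ^ a) z ≠ ((permWord n w) ^ b) z := by
    intro a b hab hb he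
    have hc : ((permWord n w) ^ (b - a)) (((permWord n w) ^ a) z)
        = ((permWord n w) ^ a) z := by
      rw [← Equiv.Perm.mul_apply, ← pow_add, Nat.sub_add_cancel (le_of_lt hab), ← he]
    obtain ⟨s, hs⟩ := h (((permWord n w) ^ a) z) z
    have hcomm : ∀ y : Fin n, ((permWord n w) ^ (b - a)) (((permWord n w) ^ s) y)
        = ((permWord n w) ^ s) (((permWord n w) ^ (b - a)) y) := by
      intro y
      rw [← Equiv.Perm.mul_apply, ← Equiv.Perm.mul_apply, ← pow_add, ← pow_add, Nat.add_comm]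
    have hz2 : ((permWord n w) ^ (b - a)) z = z := by
      calc ((permWord n w) ^ (b - a)) z
          = ((permWord n w) ^ (b - a)) (((permWord n w) ^ s) (((permWord n w) ^ a) z)) := by
            rw [hs]
        _ = ((permWord n w) ^ s) (((permWord n w) ^ (b - a)) (((permWord n w) ^ a) z)) :=
            hcomm _
        _ = ((permWord n w) ^ s) (((permWord n w) ^ a) z) := by rw [hc]
        _ = z := hs
    exact hmin (b - a) (by omega) (by omega) hz2
  have hinj : Function.Injective
      (fun a : Fin (Nat.find hex) => ((permWord n w) ^ (a : ℕ)) z) := by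
    intro a b hab
    rcases lt_trichotomy (a : ℕ) (b : ℕ) with hlt | heq | hgt
    · exact absurd hab (hinj2 _ _ hlt b.2)
    · exact Fin.ext heq
    · exact absurd hab.symm (hinj2 _ _ hgt a.2)
  have hsurj : Function.Surjective
      (fun a : Fin (Nat.find hex) => ((permWord n w) ^ (a : ℕ)) z) := by
    intro j
    obtain ⟨m, hm⟩ := h z j
    refine ⟨⟨m % Nat.find hex, Nat.mod_lt _ htpos⟩, ?_⟩
    have hd : ((permWord n w) ^ m) z = ((permWord n w) ^ (m % Nat.find hex)) z := by
      conv_lhs => rw [show m = (m / Nat.find hex) * Nat.find hex + m % Nat.find hex from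
        (Nat.div_add_mod' m _).symm]
      exact hred _ _
    have : ((permWord n w) ^ (m % Nat.find hex)) z = j := by rw [← hd]; exact hm
    exact this
  have hteqn : Nat.find hex = n := by
    have h1 : Nat.find hex ≤ n := by
      simpa using Fintype.card_le_of_injective _ hinj
    have h2 : n ≤ Nat.find hex := by
      simpa using Fintype.card_le_of_surjective _ hsurj
    omega
  have hdtop : (Nat.find (h (permWord n w z) z) : ℤ) = (n : ℤ) - 1 := by
    have hfind : Nat.find (h (permWord n w z) z) = n - 1 := by
      rw [Nat.find_eq_iff]
      constructor
      · have hp := perm_pow_succ (permWord n w) (n - 1) z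
        rw [show (n - 1) + 1 = n from by omega] at hp
        have htz' := htz
        rw [hteqn] at htz'
        rw [← hp]
        exact htz'
      · intro m hm hc
        have hzz : ((permWord n w) ^ (m + 1)) z = z := by
          rw [perm_pow_succ]; exact hc
        exact hmin (m + 1) (by omega) (by omega) hzz
    rw [hfind, Nat.cast_sub (by omega : 1 ≤ n)]
    norm_num
  have hnefix : ∀ i : Fin n, permWord n w i ≠ i := by
    intro i hfix
    have hpow : ∀ m : ℕ, ((permWord n w) ^ m) i = i := by
      intro m
      induction m with
      | zero => simp
      | succ m ihm => rw [perm_pow_succ, hfix]; exact ihm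
    have : Nontrivial (Fin n) := Fin.nontrivial_iff_two_le.mpr hn
    obtain ⟨j, hj⟩ := exists_ne i
    obtain ⟨m, hm⟩ := h i j
    rw [hpow m] at hm
    exact hj hm.symm
  have hcyc : (permWord n w).IsCycle := by
    refine ⟨z, hnefix z, ?_⟩
    intro y _
    obtain ⟨m, hm⟩ := h z y
    exact ⟨(m : ℤ), by rw [zpow_natCast]; exact hm⟩
  have hsupp : (permWord n w).support = Finset.univ := by
    ext i
    simp [Equiv.Perm.mem_support, hnefix i]
  have hs2 : Equiv.Perm.sign (permWord n w) = -(-1) ^ n := by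
    rw [hcyc.sign, hsupp, Finset.card_univ, Fintype.card_fin]
  have hZ : ((-1 : ℤ)) ^ w.length = -(-1 : ℤ) ^ n := by
    have hu := (sign_permWord w).symm.trans hs2
    have h2 := congrArg (fun u : ℤˣ => (u : ℤ)) hu
    simpa using h2
  have hpar : Even ((n : ℤ) - 1) ↔ Even ((w.length : ℤ)) := by
    rw [Int.even_sub_one, Int.even_coe_nat, Int.even_coe_nat]
    rcases Nat.even_or_odd w.length with he | ho <;> rcases Nat.even_or_odd n with hne | hno
    · rw [he.neg_one_pow, hne.neg_one_pow] at hZ; norm_num at hZ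
    · simp [he, Nat.not_even_iff_odd.mpr hno]
    · simp [hne, Nat.not_even_iff_odd.mpr ho]
    · rw [ho.neg_one_pow, hno.neg_one_pow] at hZ; norm_num at hZ
  exact ideal_aux n w z hz0 (fun i => (Nat.find (h i z) : ℤ))
    (by show ((Nat.find (h z z) : ℤ)) = 0; exact_mod_cast hdz) hstep hdtop hpar

end KCH13

/-- `Ψ` carries the ideal generated by the entries of `τ(Â) − Λ_mat·Φ^L_w·τ(A)` and
`τ(A) − τ(Â)·Φ^R_w·Λ_mat^{−1}` onto the ideal generated by the entries of
`g·τ(Â) + Λ'·Φ^L_w·τ(A)` and `τ(A) + g·τ(Â)·Φ^R_w·(Λ')^{−1}`. -/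
theorem Psi_maps_KCH_ideal (n : ℕ) (hn : 2 ≤ n) (w : List {k : ℕ // k + 1 < n})
    (h : ∀ i j : Fin n, ∃ m : ℕ, ((permWord n w) ^ m) i = j) :
    Ideal.map (Psi n fun i => (Nat.find (h i ⟨0, by omega⟩) : ℤ))
        (entriesIdeal n
          (AhatS n - Lmat n (w.length : ℤ) * PhiL n w * AS n)
          (AS n - AhatS n * PhiR n w * LmatInv n (w.length : ℤ)))
      = entriesIdeal n
          (gElt n • AhatS n + Lp n (w.length : ℤ) * PhiL n w * AS n)
          (AS n + gElt n • (AhatS n * PhiR n w * LpInv n (w.length : ℤ))) := by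
  exact KCH13.main_aux n hn w h ⟨0, by omega⟩ rfl

end
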